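/- For every scalar τ ≥ 0 and every matrix W ∈ ℝ^{n×d} with singular value decomposition W = U Σ Vᵀ (U ∈ ℝ^{n×r}, V ∈ ℝ^{d×r} having orthonormal columns and Σ = diag(σ₁,…,σ_r) with σ_i > 0), the singular value shrinkage operator P_τ(W) := U diag(max(σ₁−τ,0),…,max(σ_r−τ,0)) Vᵀ is the unique minimizer over X ∈ ℝ^{n×d} of the function X ↦ ½‖X − W‖_F² + τ‖X‖_*. -/

import Mathlib

open Matrix

/-- The trace norm (nuclear norm) of a real matrix: the sum of its singular
values, i.e. the sum of the square roots of the eigenvalues of `Mᵀ * M`. -/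
noncomputable def traceNorm {n d : ℕ} (M : Matrix (Fin n) (Fin d) ℝ) : ℝ :=
  ∑ i, Real.sqrt (((by simpa [Matrix.conjTranspose_eq_transpose_of_trivial] using
    Matrix.isHermitian_conjTranspose_mul_self M : (Mᵀ * M).IsHermitian)).eigenvalues i)

theorem Matrix.isHermitian_transpose_mul_self {n d : ℕ} (M : Matrix (Fin n) (Fin d) ℝ) :
    (Mᵀ * M).IsHermitian := by
  simpa [Matrix.conjTranspose_eq_transpose_of_trivial] using
    Matrix.isHermitian_conjTranspose_mul_self M

/-- The squared Frobenius norm of a real matrix. -/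
noncomputable def frobSq {n d : ℕ} (M : Matrix (Fin n) (Fin d) ℝ) : ℝ :=
  ∑ i, ∑ j, (M i j)^2

section Auxiliary

set_option linter.unusedVariables false

lemma svd_bessel {n m : ℕ} (u : Fin m → Fin n → ℝ)
    (horth : ∀ j k, j ≠ k → ∑ i, u j i * u k i = 0)
    (hnorm : ∀ j, ∑ i, u j i * u j i ≤ 1)
    (x : Fin n → ℝ) :
    ∑ j, (∑ i, x i * u j i)^2 ≤ ∑ i, (x i)^2 := by
  set c : Fin m → ℝ := fun j => ∑ i, x i * u j i with hc
  have h0 : 0 ≤ ∑ i, (x i - ∑ j, c j * u j i)^2 :=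
    Finset.sum_nonneg fun i _ => sq_nonneg _
  have e1 : ∑ i, (x i - ∑ j, c j * u j i)^2
      = ∑ i, (x i)^2 - 2 * ∑ i, (x i * ∑ j, c j * u j i)
        + ∑ i, (∑ j, c j * u j i) * (∑ j, c j * u j i) := by
    rw [Finset.mul_sum, ← Finset.sum_sub_distrib, ← Finset.sum_add_distrib]
    exact Finset.sum_congr rfl fun i _ => by ring
  have e2 : ∑ i, (x i * ∑ j, c j * u j i) = ∑ j, (c j)^2 := by
    simp_rw [Finset.mul_sum]
    rw [Finset.sum_comm]
    refine Finset.sum_congr rfl fun j _ => ?_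
    calc ∑ i, x i * (c j * u j i) = (∑ i, x i * u j i) * c j := by
          rw [Finset.sum_mul]; exact Finset.sum_congr rfl fun i _ => by ring
      _ = c j ^ 2 := by rw [sq]
  have e3 : ∑ i, (∑ j, c j * u j i) * (∑ j, c j * u j i)
      = ∑ j, ∑ k, c j * c k * (∑ i, u j i * u k i) := by
    simp_rw [Finset.sum_mul_sum, Finset.mul_sum]
    rw [Finset.sum_comm]
    refine Finset.sum_congr rfl fun j _ => ?_
    rw [Finset.sum_comm]
    exact Finset.sum_congr rfl fun k _ => Finset.sum_congr rfl fun i _ => by ring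
  have e4 : ∑ j, ∑ k, c j * c k * (∑ i, u j i * u k i) ≤ ∑ j, (c j)^2 := by
    refine Finset.sum_le_sum fun j _ => ?_
    have h5 : ∑ k, c j * c k * (∑ i, u j i * u k i) = c j * c j * (∑ i, u j i * u j i) := by
      refine Finset.sum_eq_single j (fun k _ hk => ?_) (by simp)
      rw [horth j k (Ne.symm hk), mul_zero]
    rw [h5]
    nlinarith [sq_nonneg (c j), hnorm j]
  nlinarith [h0, e1, e2, e3, e4]


lemma svd_sum_rot {p q s : ℕ} (f : Fin p → Fin q → Fin s → ℝ) :
    ∑ a, ∑ b, ∑ j, f a b j = ∑ j, ∑ a, ∑ b, f a b j :=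
  calc ∑ a, ∑ b, ∑ j, f a b j
      = ∑ a, ∑ j, ∑ b, f a b j := Finset.sum_congr rfl fun a _ => Finset.sum_comm
    _ = ∑ j, ∑ a, ∑ b, f a b j := Finset.sum_comm

lemma svd_ip_eq {n d m : ℕ} (u : Fin m → Fin n → ℝ) (v : Fin m → Fin d → ℝ) (c : Fin m → ℝ)
    (Y : Matrix (Fin n) (Fin d) ℝ)
    (hY : ∀ i k, Y i k = ∑ j, c j * u j i * v j k)
    (x : Fin n → ℝ) (y : Fin d → ℝ) :
    ∑ i, ∑ k, x i * Y i k * y k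
      = ∑ j, c j * ((∑ i, x i * u j i) * (∑ k, y k * v j k)) := by
  have : ∀ i k, x i * Y i k * y k = ∑ j, c j * (x i * u j i) * (y k * v j k) := by
    intro i k
    rw [hY, Finset.mul_sum, Finset.sum_mul]
    exact Finset.sum_congr rfl fun j _ => by ring
  simp_rw [this]
  rw [svd_sum_rot (fun i k j => c j * (x i * u j i) * (y k * v j k))]
  refine Finset.sum_congr rfl fun j _ => ?_
  rw [Finset.sum_mul_sum, Finset.mul_sum]
  refine Finset.sum_congr rfl fun i _ => ?_
  rw [Finset.mul_sum]
  exact Finset.sum_congr rfl fun k _ => by ring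

lemma svd_bilin {n d m : ℕ} {τ : ℝ} (hτ : 0 ≤ τ)
    (u : Fin m → Fin n → ℝ) (v : Fin m → Fin d → ℝ) (c : Fin m → ℝ)
    (huo : ∀ j k, j ≠ k → ∑ i, u j i * u k i = 0)
    (hun : ∀ j, ∑ i, u j i * u j i ≤ 1)
    (hvo : ∀ j k, j ≠ k → ∑ i, v j i * v k i = 0)
    (hvn : ∀ j, ∑ i, v j i * v j i ≤ 1)
    (hc : ∀ j, |c j| ≤ τ)
    (Y : Matrix (Fin n) (Fin d) ℝ)
    (hY : ∀ i k, Y i k = ∑ j, c j * u j i * v j k)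
    (x : Fin n → ℝ) (y : Fin d → ℝ) :
    ∑ i, ∑ k, x i * Y i k * y k
      ≤ τ * Real.sqrt (∑ i, (x i)^2) * Real.sqrt (∑ k, (y k)^2) := by
  rw [svd_ip_eq u v c Y hY x y]
  set A : Fin m → ℝ := fun j => ∑ i, x i * u j i
  set B : Fin m → ℝ := fun j => ∑ k, y k * v j k
  have step1 : ∑ j, c j * (A j * B j) ≤ τ * ∑ j, |A j| * |B j| := by
    rw [Finset.mul_sum]
    refine Finset.sum_le_sum fun j _ => ?_
    calc c j * (A j * B j) ≤ |c j * (A j * B j)| := le_abs_self _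
      _ = |c j| * (|A j| * |B j|) := by rw [abs_mul, abs_mul]
      _ ≤ τ * (|A j| * |B j|) :=
        mul_le_mul_of_nonneg_right (hc j) (mul_nonneg (abs_nonneg _) (abs_nonneg _))
  have step2 : ∑ j, |A j| * |B j|
      ≤ Real.sqrt (∑ j, (A j)^2) * Real.sqrt (∑ j, (B j)^2) := by
    simpa [sq_abs] using Real.sum_mul_le_sqrt_mul_sqrt Finset.univ (fun j => |A j|) (fun j => |B j|)
  have step3 : Real.sqrt (∑ j, (A j)^2) ≤ Real.sqrt (∑ i, (x i)^2) :=
    Real.sqrt_le_sqrt (svd_bessel u huo hun x)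
  have step4 : Real.sqrt (∑ j, (B j)^2) ≤ Real.sqrt (∑ k, (y k)^2) :=
    Real.sqrt_le_sqrt (svd_bessel v hvo hvn y)
  calc ∑ j, c j * (A j * B j) ≤ τ * ∑ j, |A j| * |B j| := step1
    _ ≤ τ * (Real.sqrt (∑ j, (A j)^2) * Real.sqrt (∑ j, (B j)^2)) :=
        mul_le_mul_of_nonneg_left step2 hτ
    _ ≤ τ * (Real.sqrt (∑ i, (x i)^2) * Real.sqrt (∑ k, (y k)^2)) := by
        refine mul_le_mul_of_nonneg_left ?_ hτ
        exact mul_le_mul step3 step4 (Real.sqrt_nonneg _) (Real.sqrt_nonneg _)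
    _ = τ * Real.sqrt (∑ i, (x i)^2) * Real.sqrt (∑ k, (y k)^2) := by ring



section spectral
variable {n d : ℕ} (X : Matrix (Fin n) (Fin d) ℝ)

noncomputable def svdQ : Fin d → Fin d → ℝ :=
  fun j => ⇑((Matrix.isHermitian_transpose_mul_self X).eigenvectorBasis j)

lemma svdQ_orth : ∀ j k, ∑ i, svdQ X j i * svdQ X k i = if j = k then (1:ℝ) else 0 := by
  intro j k
  have h := (Matrix.isHermitian_transpose_mul_self X).eigenvectorBasis.orthonormal
  rw [orthonormal_iff_ite] at h
  have h2 := h j k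
  simpa [PiLp.inner_apply, svdQ, mul_comm] using h2

lemma svdQ_eig (j : Fin d) :
    (Xᵀ * X) *ᵥ svdQ X j
      = (Matrix.isHermitian_transpose_mul_self X).eigenvalues j • svdQ X j :=
  (Matrix.isHermitian_transpose_mul_self X).mulVec_eigenvectorBasis j

lemma svdQ_lam (j : Fin d) :
    ∑ i, ((X *ᵥ svdQ X j) i)^2
      = (Matrix.isHermitian_transpose_mul_self X).eigenvalues j := by
  have e1 : ∑ i, ((X *ᵥ svdQ X j) i)^2 = (X *ᵥ svdQ X j) ⬝ᵥ (X *ᵥ svdQ X j) := by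
    simp [dotProduct, sq]
  have e2 : svdQ X j ⬝ᵥ ((Xᵀ * X) *ᵥ svdQ X j) = (X *ᵥ svdQ X j) ⬝ᵥ (X *ᵥ svdQ X j) := by
    rw [← Matrix.mulVec_mulVec, Matrix.dotProduct_mulVec, Matrix.vecMul_transpose]
  have e3 : svdQ X j ⬝ᵥ ((Xᵀ * X) *ᵥ svdQ X j)
      = (Matrix.isHermitian_transpose_mul_self X).eigenvalues j := by
    rw [svdQ_eig, dotProduct_smul, smul_eq_mul]
    have hqq : ∑ i, svdQ X j i * svdQ X j i = 1 := by simpa using svdQ_orth X j j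
    rw [show svdQ X j ⬝ᵥ svdQ X j = ∑ i, svdQ X j i * svdQ X j i from rfl, hqq, mul_one]
  rw [e1, ← e2, e3]

lemma svdQ_lam_nonneg (j : Fin d) :
    0 ≤ (Matrix.isHermitian_transpose_mul_self X).eigenvalues j := by
  rw [← svdQ_lam X j]; exact Finset.sum_nonneg fun i _ => sq_nonneg _

lemma svdQ_complete (i : Fin n) (k : Fin d) :
    X i k = ∑ j, (X *ᵥ svdQ X j) i * svdQ X j k := by
  have hrow : ∀ l k', ∑ j, svdQ X j l * svdQ X j k' = if l = k' then (1:ℝ) else 0 := by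
    intro l k'
    have hu := Unitary.coe_mul_star_self
      (Matrix.IsHermitian.eigenvectorUnitary (Matrix.isHermitian_transpose_mul_self X))
    have := congrFun (congrFun (congrArg (fun M : Matrix (Fin d) (Fin d) ℝ => M) hu) l) k'
    simp only [Matrix.mul_apply, Matrix.star_apply, Matrix.one_apply] at this
    rw [← this]
    refine Finset.sum_congr rfl fun j _ => ?_
    simp [svdQ, Matrix.IsHermitian.eigenvectorUnitary_apply]
  calc X i k = ∑ l, X i l * (if l = k then (1:ℝ) else 0) := by
        rw [Finset.sum_eq_single k (fun l _ hl => by simp [hl]) (by simp)]; simp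
    _ = ∑ l, X i l * ∑ j, svdQ X j l * svdQ X j k := by
        refine Finset.sum_congr rfl fun l _ => by rw [hrow]
    _ = ∑ j, (X *ᵥ svdQ X j) i * svdQ X j k := by
        simp_rw [Finset.mul_sum]
        rw [Finset.sum_comm]
        refine Finset.sum_congr rfl fun j _ => ?_
        rw [Matrix.mulVec, dotProduct, Finset.sum_mul]
        exact Finset.sum_congr rfl fun l _ => by ring

end spectral

lemma svd_dual_le {n d : ℕ} (τ : ℝ) (X Y : Matrix (Fin n) (Fin d) ℝ)
    (hY : ∀ (x : Fin n → ℝ) (y : Fin d → ℝ),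
      ∑ i, ∑ k, x i * Y i k * y k
        ≤ τ * Real.sqrt (∑ i, (x i)^2) * Real.sqrt (∑ k, (y k)^2)) :
    ∑ i, ∑ k, X i k * Y i k ≤ τ * traceNorm X := by
  have e1 : ∑ i, ∑ k, X i k * Y i k
      = ∑ j, ∑ i, ∑ k, (X *ᵥ svdQ X j) i * Y i k * svdQ X j k := by
    rw [← svd_sum_rot (fun i k j => (X *ᵥ svdQ X j) i * Y i k * svdQ X j k)]
    refine Finset.sum_congr rfl fun i _ => Finset.sum_congr rfl fun k _ => ?_
    rw [show ∑ j, (X *ᵥ svdQ X j) i * Y i k * svdQ X j k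
        = (∑ j, (X *ᵥ svdQ X j) i * svdQ X j k) * Y i k from by
      rw [Finset.sum_mul]; exact Finset.sum_congr rfl fun j _ => by ring]
    rw [← svdQ_complete X i k]
  rw [e1]
  have e2 : ∀ j, ∑ i, ∑ k, (X *ᵥ svdQ X j) i * Y i k * svdQ X j k
      ≤ τ * Real.sqrt ((Matrix.isHermitian_transpose_mul_self X).eigenvalues j) := by
    intro j
    have := hY (X *ᵥ svdQ X j) (svdQ X j)
    have hq : ∑ k, (svdQ X j k)^2 = 1 := by
      simpa [sq] using svdQ_orth X j j
    rw [svdQ_lam X j, hq, Real.sqrt_one, mul_one] at this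
    exact this
  calc ∑ j, ∑ i, ∑ k, (X *ᵥ svdQ X j) i * Y i k * svdQ X j k
      ≤ ∑ j, τ * Real.sqrt ((Matrix.isHermitian_transpose_mul_self X).eigenvalues j) :=
        Finset.sum_le_sum fun j _ => e2 j
    _ = τ * traceNorm X := by rw [traceNorm, Finset.mul_sum]




lemma svdQ_mixed {n d : ℕ} (X : Matrix (Fin n) (Fin d) ℝ) (j k : Fin d) :
    ∑ i, (X *ᵥ svdQ X j) i * (X *ᵥ svdQ X k) i
      = (Matrix.isHermitian_transpose_mul_self X).eigenvalues k
          * (if j = k then 1 else 0) := by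
  have e2 : svdQ X j ⬝ᵥ ((Xᵀ * X) *ᵥ svdQ X k) = (X *ᵥ svdQ X j) ⬝ᵥ (X *ᵥ svdQ X k) := by
    rw [← Matrix.mulVec_mulVec, Matrix.dotProduct_mulVec, Matrix.vecMul_transpose]
  have e3 : svdQ X j ⬝ᵥ ((Xᵀ * X) *ᵥ svdQ X k)
      = (Matrix.isHermitian_transpose_mul_self X).eigenvalues k * (if j = k then 1 else 0) := by
    rw [svdQ_eig, dotProduct_smul, smul_eq_mul]
    rw [show svdQ X j ⬝ᵥ svdQ X k = ∑ i, svdQ X j i * svdQ X k i from rfl, svdQ_orth X j k]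
  rw [show ∑ i, (X *ᵥ svdQ X j) i * (X *ᵥ svdQ X k) i
      = (X *ᵥ svdQ X j) ⬝ᵥ (X *ᵥ svdQ X k) from rfl, ← e2, e3]

lemma svd_dual_attain {n d : ℕ} (X : Matrix (Fin n) (Fin d) ℝ) :
    ∃ Y₀ : Matrix (Fin n) (Fin d) ℝ,
      (∀ (x : Fin n → ℝ) (y : Fin d → ℝ),
        ∑ i, ∑ k, x i * Y₀ i k * y k
          ≤ 1 * Real.sqrt (∑ i, (x i)^2) * Real.sqrt (∑ k, (y k)^2)) ∧
      ∑ i, ∑ k, X i k * Y₀ i k = traceNorm X := by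
  classical
  set lam := (Matrix.isHermitian_transpose_mul_self X).eigenvalues with hlam
  set u : Fin d → Fin n → ℝ := fun j =>
    if lam j = 0 then 0 else fun i => (Real.sqrt (lam j))⁻¹ * (X *ᵥ svdQ X j) i with hu
  set c : Fin d → ℝ := fun j => if lam j = 0 then 0 else 1 with hc
  set Y₀ : Matrix (Fin n) (Fin d) ℝ := fun i k => ∑ j, c j * u j i * svdQ X j k with hY₀
  have hlpos : ∀ j, lam j ≠ 0 → 0 < lam j := fun j h =>
    lt_of_le_of_ne (svdQ_lam_nonneg X j) (Ne.symm h)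
  have huo : ∀ j k, j ≠ k → ∑ i, u j i * u k i = 0 := by
    intro j k hjk
    by_cases hj : lam j = 0
    · simp [hu, hj]
    by_cases hk : lam k = 0
    · simp [hu, hk]
    simp only [hu, if_neg hj, if_neg hk]
    have : ∑ i, (Real.sqrt (lam j))⁻¹ * (X *ᵥ svdQ X j) i
        * ((Real.sqrt (lam k))⁻¹ * (X *ᵥ svdQ X k) i)
        = (Real.sqrt (lam j))⁻¹ * (Real.sqrt (lam k))⁻¹
          * ∑ i, (X *ᵥ svdQ X j) i * (X *ᵥ svdQ X k) i := by
      rw [Finset.mul_sum]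
      exact Finset.sum_congr rfl fun i _ => by ring
    rw [this, svdQ_mixed X j k, if_neg hjk, mul_zero, mul_zero]
  have hun : ∀ j, ∑ i, u j i * u j i ≤ 1 := by
    intro j
    by_cases hj : lam j = 0
    · simp [hu, hj]
    simp only [hu, if_neg hj]
    have : ∑ i, (Real.sqrt (lam j))⁻¹ * (X *ᵥ svdQ X j) i
        * ((Real.sqrt (lam j))⁻¹ * (X *ᵥ svdQ X j) i)
        = (Real.sqrt (lam j))⁻¹ * (Real.sqrt (lam j))⁻¹ * ∑ i, ((X *ᵥ svdQ X j) i)^2 := by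
      rw [Finset.mul_sum]
      exact Finset.sum_congr rfl fun i _ => by ring
    rw [this, svdQ_lam X j]
    have hl := hlpos j hj
    rw [← mul_inv, Real.mul_self_sqrt hl.le, inv_mul_cancel₀ hj]
  have hvo : ∀ j k, j ≠ k → ∑ i, svdQ X j i * svdQ X k i = 0 := by
    intro j k hjk
    rw [svdQ_orth X j k, if_neg hjk]
  have hvn : ∀ j, ∑ i, svdQ X j i * svdQ X j i ≤ 1 := by
    intro j
    rw [show ∑ i, svdQ X j i * svdQ X j i = 1 by simpa using svdQ_orth X j j]
  have hcabs : ∀ j, |c j| ≤ 1 := by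
    intro j
    by_cases hj : lam j = 0 <;> simp [hc, hj]
  refine ⟨Y₀, fun x y => svd_bilin zero_le_one u (svdQ X) c huo hun hvo hvn hcabs Y₀
    (fun i k => rfl) x y, ?_⟩
  have key : ∀ i k, X i k * Y₀ i k = ∑ j, c j * u j i * (X i k * svdQ X j k) := by
    intro i k
    rw [hY₀]
    dsimp only
    rw [Finset.mul_sum]
    exact Finset.sum_congr rfl fun j _ => by ring
  simp_rw [key]
  rw [svd_sum_rot (fun i k j => c j * u j i * (X i k * svdQ X j k))]
  have term : ∀ j, ∑ i, ∑ k, c j * u j i * (X i k * svdQ X j k)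
      = Real.sqrt (lam j) := by
    intro j
    have inner1 : ∀ i, ∑ k, c j * u j i * (X i k * svdQ X j k)
        = c j * u j i * (X *ᵥ svdQ X j) i := by
      intro i
      rw [← Finset.mul_sum]
      rfl
    simp_rw [inner1]
    by_cases hj : lam j = 0
    · simp [hc, hj, Real.sqrt_eq_zero', hj.le]
    · have hl := hlpos j hj
      simp only [hc, hu, if_neg hj]
      have : ∑ i, 1 * ((Real.sqrt (lam j))⁻¹ * (X *ᵥ svdQ X j) i) * (X *ᵥ svdQ X j) i
          = (Real.sqrt (lam j))⁻¹ * ∑ i, ((X *ᵥ svdQ X j) i)^2 := by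
        rw [Finset.mul_sum]
        exact Finset.sum_congr rfl fun i _ => by ring
      rw [this, svdQ_lam X j]
      rw [show (Matrix.isHermitian_transpose_mul_self X).eigenvalues j = lam j from rfl]
      have hs : Real.sqrt (lam j) ≠ 0 := by positivity
      field_simp
      rw [Real.sq_sqrt hl.le]
  simp_rw [term]
  rfl


end Auxiliary




/-- Theorem 2.1 of Cai–Candès–Shen: for τ ≥ 0 and W with SVD W = U Σ Vᵀ
(U, V with orthonormal columns, positive singular values σᵢ), the singular
value shrinkage P_τ(W) = U diag([σᵢ − τ]₊) Vᵀ is the unique minimizer of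
X ↦ ½‖X − W‖_F² + τ‖X‖_*. -/
theorem svd_shrinkage_unique_minimizer {n d r : ℕ} (τ : ℝ) (hτ : 0 ≤ τ)
    (W : Matrix (Fin n) (Fin d) ℝ)
    (U : Matrix (Fin n) (Fin r) ℝ) (V : Matrix (Fin d) (Fin r) ℝ)
    (σ : Fin r → ℝ) (hσ : ∀ i, 0 < σ i)
    (hU : Uᵀ * U = 1) (hV : Vᵀ * V = 1)
    (hW : W = U * Matrix.diagonal σ * Vᵀ) :
    ∀ X : Matrix (Fin n) (Fin d) ℝ,
      X ≠ U * Matrix.diagonal (fun i => max (σ i - τ) 0) * Vᵀ →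
      (1/2) * frobSq (U * Matrix.diagonal (fun i => max (σ i - τ) 0) * Vᵀ - W)
          + τ * traceNorm (U * Matrix.diagonal (fun i => max (σ i - τ) 0) * Vᵀ)
        < (1/2) * frobSq (X - W) + τ * traceNorm X := by
  intro X hne
  set a : Fin r → ℝ := fun j => max (σ j - τ) 0 with ha
  set P : Matrix (Fin n) (Fin d) ℝ := U * Matrix.diagonal a * Vᵀ with hP
  set b : Fin r → ℝ := fun j => σ j - a j with hb
  -- basic facts about a and b
  have ha1 : ∀ j, σ j - τ ≤ a j := fun j => le_max_left _ _
  have ha2 : ∀ j, 0 ≤ a j := fun j => le_max_right _ _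
  have ha3 : ∀ j, a j ≤ σ j := fun j => max_le (by linarith) (hσ j).le
  have hbabs : ∀ j, |b j| ≤ τ := fun j =>
    abs_le.2 ⟨by simp only [hb]; linarith [ha3 j, hσ j], by simp only [hb]; linarith [ha1 j]⟩
  -- column orthonormality
  have hUcol : ∀ j k, ∑ i, U i j * U i k = if j = k then (1:ℝ) else 0 := by
    intro j k
    have := congrFun (congrFun hU j) k
    simpa [Matrix.mul_apply, Matrix.one_apply] using this
  have hVcol : ∀ j k, ∑ i, V i j * V i k = if j = k then (1:ℝ) else 0 := by
    intro j k
    have := congrFun (congrFun hV j) k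
    simpa [Matrix.mul_apply, Matrix.one_apply] using this
  -- entries of U * diagonal c * Vᵀ
  have hent : ∀ (c : Fin r → ℝ) (i : Fin n) (k : Fin d),
      (U * Matrix.diagonal c * Vᵀ) i k = ∑ j, c j * U i j * V k j := by
    intro c i k
    rw [Matrix.mul_apply]
    refine Finset.sum_congr rfl fun j _ => ?_
    rw [Matrix.mul_diagonal, Matrix.transpose_apply]
    ring
  -- entries of W - P
  have hWP : ∀ i k, (W - P) i k = ∑ j, b j * U i j * V k j := by
    intro i k
    rw [Matrix.sub_apply, hW, hP, hent σ, hent a, ← Finset.sum_sub_distrib]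
    exact Finset.sum_congr rfl fun j _ => by simp only [hb]; ring
  -- inner product helper: ⟨A, B⟩ = trace (Aᵀ * B)
  have ipeq : ∀ A B : Matrix (Fin n) (Fin d) ℝ,
      ∑ i, ∑ k, A i k * B i k = Matrix.trace (Aᵀ * B) := by
    intro A B
    rw [Matrix.trace]
    simp only [Matrix.diag, Matrix.mul_apply, Matrix.transpose_apply]
    rw [Finset.sum_comm]
  -- key inequality: ∀ X, ⟨X, W - P⟩ ≤ τ * traceNorm X
  have keyX : ∀ Z : Matrix (Fin n) (Fin d) ℝ,
      ∑ i, ∑ k, Z i k * (W - P) i k ≤ τ * traceNorm Z := by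
    intro Z
    refine svd_dual_le τ Z (W - P) fun x y => ?_
    refine svd_bilin hτ (fun j i => U i j) (fun j k => V k j) b
      (fun j k hjk => by rw [hUcol j k, if_neg hjk])
      (fun j => by rw [hUcol j j, if_pos rfl])
      (fun j k hjk => by rw [hVcol j k, if_neg hjk])
      (fun j => by rw [hVcol j j, if_pos rfl])
      hbabs (W - P) hWP x y
  -- ⟨P, W - P⟩ = τ * ∑ a
  have ipP : ∑ i, ∑ k, P i k * (W - P) i k = τ * ∑ j, a j := by
    rw [ipeq]
    have hPT : Pᵀ = V * Matrix.diagonal a * Uᵀ := by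
      rw [hP, Matrix.transpose_mul, Matrix.transpose_mul, Matrix.transpose_transpose,
        Matrix.diagonal_transpose, Matrix.mul_assoc]
    have hWPm : W - P = U * Matrix.diagonal b * Vᵀ := by
      ext i k
      rw [hWP i k, hent b i k]
    rw [hPT, hWPm]
    have e : V * Matrix.diagonal a * Uᵀ * (U * Matrix.diagonal b * Vᵀ)
        = V * (Matrix.diagonal a * Matrix.diagonal b) * Vᵀ := by
      rw [show V * Matrix.diagonal a * Uᵀ * (U * Matrix.diagonal b * Vᵀ)
          = V * Matrix.diagonal a * (Uᵀ * U) * Matrix.diagonal b * Vᵀ by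
        simp only [Matrix.mul_assoc]]
      rw [hU, Matrix.mul_one]
      simp only [Matrix.mul_assoc]
    rw [e, Matrix.trace_mul_cycle, ← Matrix.mul_assoc, hV, Matrix.one_mul,
      Matrix.diagonal_mul_diagonal, Matrix.trace_diagonal, Finset.mul_sum]
    refine Finset.sum_congr rfl fun j _ => ?_
    simp only [ha, hb]
    rcases le_total (σ j - τ) 0 with h | h
    · rw [max_eq_right h]; ring
    · rw [max_eq_left h]; ring
  -- traceNorm P ≤ ∑ a
  have tnP : traceNorm P ≤ ∑ j, a j := by
    obtain ⟨Y₀, hbd, hat⟩ := svd_dual_attain P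
    rw [← hat]
    have e : ∑ i, ∑ k, P i k * Y₀ i k
        = ∑ j, a j * (∑ i, ∑ k, U i j * Y₀ i k * V k j) := by
      have h1 : ∀ i k, P i k * Y₀ i k = ∑ j, a j * (U i j * Y₀ i k * V k j) := by
        intro i k
        rw [hP, hent a, Finset.sum_mul]
        exact Finset.sum_congr rfl fun j _ => by ring
      simp_rw [h1]
      rw [svd_sum_rot (fun i k j => a j * (U i j * Y₀ i k * V k j))]
      refine Finset.sum_congr rfl fun j _ => ?_
      rw [Finset.mul_sum]
      refine Finset.sum_congr rfl fun i _ => ?_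
      rw [Finset.mul_sum]
    rw [e]
    refine Finset.sum_le_sum fun j _ => ?_
    have hx : ∑ i, (U i j)^2 = 1 := by
      have := hUcol j j; simp only [if_pos rfl] at this; simpa [sq] using this
    have hy : ∑ k, (V k j)^2 = 1 := by
      have := hVcol j j; simp only [if_pos rfl] at this; simpa [sq] using this
    have := hbd (fun i => U i j) (fun k => V k j)
    rw [hx, hy, Real.sqrt_one, mul_one, mul_one] at this
    calc a j * (∑ i, ∑ k, U i j * Y₀ i k * V k j) ≤ a j * 1 :=
          mul_le_mul_of_nonneg_left this (ha2 j)
      _ = a j := mul_one _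
  -- frobSq expansion
  have expand : frobSq (X - W)
      = frobSq (X - P) + 2 * (∑ i, ∑ k, (X - P) i k * (P - W) i k) + frobSq (P - W) := by
    simp only [frobSq]
    rw [Finset.mul_sum, ← Finset.sum_add_distrib, ← Finset.sum_add_distrib]
    refine Finset.sum_congr rfl fun i _ => ?_
    rw [Finset.mul_sum, ← Finset.sum_add_distrib, ← Finset.sum_add_distrib]
    refine Finset.sum_congr rfl fun k _ => ?_
    simp only [Matrix.sub_apply]
    ring
  -- cross term rewrite
  have cross : ∑ i, ∑ k, (X - P) i k * (P - W) i k
      = (∑ i, ∑ k, P i k * (W - P) i k) - (∑ i, ∑ k, X i k * (W - P) i k) := by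
    rw [← Finset.sum_sub_distrib]
    refine Finset.sum_congr rfl fun i _ => ?_
    rw [← Finset.sum_sub_distrib]
    refine Finset.sum_congr rfl fun k _ => ?_
    simp only [Matrix.sub_apply]
    ring
  -- positivity of frobSq (X - P)
  have hpos : 0 < frobSq (X - P) := by
    have hne2 : ∃ i k, X i k ≠ P i k := by
      by_contra h
      push_neg at h
      exact hne (by ext i k; exact h i k)
    obtain ⟨i0, k0, hik⟩ := hne2
    have inner0 : 0 < ∑ k, ((X - P) i0 k)^2 := by
      refine Finset.sum_pos' (fun k _ => sq_nonneg _) ⟨k0, Finset.mem_univ _, ?_⟩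
      have : (X - P) i0 k0 ≠ 0 := by
        simp only [Matrix.sub_apply]; exact sub_ne_zero_of_ne hik
      positivity
    refine Finset.sum_pos' (fun i _ => Finset.sum_nonneg fun k _ => sq_nonneg _)
      ⟨i0, Finset.mem_univ _, inner0⟩
  -- final assembly
  have h1 : ∑ i, ∑ k, X i k * (W - P) i k ≤ τ * traceNorm X := keyX X
  have h2 : τ * traceNorm P ≤ τ * ∑ j, a j := mul_le_mul_of_nonneg_left tnP hτ
  rw [expand, cross]
  linarith [hpos, h1, h2, ipP]
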